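/- Let π ∈ (0,1), μ ∈ ℝ, λ ∈ ℝ, let ℓ > 0, and let G be a probability measure on (0,∞) with support contained in [ℓ, ∞) and ∫ log σ dG(σ) < ∞. Define the mixture density f(z) = π φ(z; 0,1) + (1−π) f_SNSM(z; μ, λ, G). Then the negative expected log-density is finite: −∫_{−∞}^{∞} f(z) log f(z) dz < ∞. -/

import Mathlib

open MeasureTheory

/-- Standard normal density. -/
noncomputable def stdPhi (z : ℝ) : ℝ := Real.exp (-(z ^ 2) / 2) / Real.sqrt (2 * Real.pi)

/-- Standard normal cumulative distribution function. -/
noncomputable def stdPhiCDF (z : ℝ) : ℝ := ∫ t in Set.Iic z, stdPhi t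

lemma stdPhi_nonneg (z : ℝ) : 0 ≤ stdPhi z := by
  unfold stdPhi; positivity

lemma stdPhi_continuous : Continuous stdPhi := by
  unfold stdPhi
  exact (Real.continuous_exp.comp (by continuity)).div_const _

lemma stdPhi_measurable : Measurable stdPhi := stdPhi_continuous.measurable

lemma integrable_stdPhi : Integrable stdPhi := by
  have h : Integrable (fun z : ℝ => Real.exp (-(1/2 : ℝ) * z ^ 2)) := integrable_exp_neg_mul_sq (by norm_num)
  have := h.div_const (Real.sqrt (2 * Real.pi))
  refine this.congr (Filter.Eventually.of_forall fun z => ?_)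
  unfold stdPhi
  ring_nf

lemma integrable_stdPhi_sq : Integrable (fun t : ℝ => stdPhi t * t ^ 2) := by
  have h : Integrable (fun z : ℝ => z ^ ((2:ℕ):ℝ) * Real.exp (-(1/2 : ℝ) * z ^ 2)) :=
    integrable_rpow_mul_exp_neg_mul_sq (by norm_num) (by norm_num)
  have := h.div_const (Real.sqrt (2 * Real.pi))
  refine this.congr (Filter.Eventually.of_forall fun z => ?_)
  simp only [Real.rpow_natCast]
  unfold stdPhi
  ring_nf

/-- Total mass of `stdPhi` (equals 1, but we only need finiteness facts). -/
noncomputable def Iphi : ℝ := ∫ t, stdPhi t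

/-- Second moment constant. -/
noncomputable def Jphi : ℝ := ∫ t, stdPhi t * t ^ 2

lemma Iphi_nonneg : 0 ≤ Iphi := integral_nonneg stdPhi_nonneg

lemma Jphi_nonneg : 0 ≤ Jphi := integral_nonneg fun t => mul_nonneg (stdPhi_nonneg t) (sq_nonneg t)

lemma stdPhiCDF_nonneg (z : ℝ) : 0 ≤ stdPhiCDF z :=
  setIntegral_nonneg measurableSet_Iic fun t _ => stdPhi_nonneg t

lemma stdPhiCDF_le (z : ℝ) : stdPhiCDF z ≤ Iphi :=
  setIntegral_le_integral integrable_stdPhi (Filter.Eventually.of_forall stdPhi_nonneg)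

lemma stdPhiCDF_mono : Monotone stdPhiCDF := by
  intro a b hab
  exact setIntegral_mono_set integrable_stdPhi.integrableOn
    (Filter.Eventually.of_forall stdPhi_nonneg) (Filter.Eventually.of_forall fun t ht => le_trans ht hab)

lemma stdPhiCDF_measurable : Measurable stdPhiCDF := stdPhiCDF_mono.measurable

/-- Skew-normal density with location `μ`, shape `lam`, scale `σ`. -/
noncomputable def snPDF (μ lam σ z : ℝ) : ℝ :=
  (2 / σ) * stdPhi ((z - μ) / σ) * stdPhiCDF (lam * ((z - μ) / σ))

/-- Skew-normal scale mixture density with mixing distribution `G`. -/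
noncomputable def snsmPDF (μ lam : ℝ) (G : Measure ℝ) (z : ℝ) : ℝ :=
  ∫ σ, snPDF μ lam σ z ∂G

lemma snPDF_nonneg (μ lam : ℝ) {σ : ℝ} (hσ : 0 ≤ σ) (z : ℝ) : 0 ≤ snPDF μ lam σ z := by
  unfold snPDF
  have := stdPhi_nonneg ((z - μ) / σ)
  have := stdPhiCDF_nonneg (lam * ((z - μ) / σ))
  positivity

lemma snPDF_le (μ lam : ℝ) {σ : ℝ} (hσ : 0 < σ) (z : ℝ) :
    snPDF μ lam σ z ≤ 2 / σ * stdPhi ((z - μ) / σ) * Iphi := by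
  unfold snPDF
  have h1 := stdPhi_nonneg ((z - μ) / σ)
  have h2 : (0:ℝ) ≤ 2 / σ * stdPhi ((z - μ) / σ) := by positivity
  exact mul_le_mul_of_nonneg_left (stdPhiCDF_le _) h2

lemma snPDF_jointly_measurable (μ lam : ℝ) :
    Measurable (fun q : ℝ × ℝ => snPDF μ lam q.1 q.2) := by
  unfold snPDF
  have m2 : Measurable fun q : ℝ × ℝ => (q.2 - μ) / q.1 :=
    (measurable_snd.sub measurable_const).div measurable_fst
  exact ((measurable_const.div measurable_fst).mul (stdPhi_measurable.comp m2)).mul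
    (stdPhiCDF_measurable.comp (measurable_const.mul m2))

lemma key_ineq (x z : ℝ) (hx : 0 ≤ x) :
    -(x * Real.log x) ≤ x * Real.log (1 + z ^ 2) + (1 + z ^ 2)⁻¹ := by
  have hz : (0:ℝ) < 1 + z ^ 2 := by positivity
  rcases eq_or_lt_of_le hx with h0 | h0
  · rw [← h0]; simp; positivity
  · have e1 : Real.log ((1 + z ^ 2)⁻¹ / x) = -Real.log (1 + z ^ 2) - Real.log x := by
      rw [Real.log_div (by positivity) h0.ne', Real.log_inv]
    have e2 := Real.log_le_sub_one_of_pos (show 0 < (1 + z ^ 2)⁻¹ / x by positivity)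
    rw [e1] at e2
    have e3 := mul_le_mul_of_nonneg_left e2 hx
    have e4 : x * ((1 + z ^ 2)⁻¹ / x - 1) = (1 + z ^ 2)⁻¹ - x := by
      field_simp
    rw [e4] at e3
    nlinarith [Real.log_nonneg (by nlinarith : (1:ℝ) ≤ 1 + z ^ 2)]

lemma log_one_add_sq_le {σ : ℝ} (hσ : 0 < σ) :
    Real.log (1 + σ ^ 2) ≤ Real.log 2 + 2 * max (Real.log σ) 0 := by
  rcases le_or_gt 1 σ with h1 | h1
  · have hlogσ : 0 ≤ Real.log σ := Real.log_nonneg h1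
    have : Real.log (1 + σ ^ 2) ≤ Real.log (2 * σ ^ 2) :=
      Real.log_le_log (by positivity) (by nlinarith)
    rw [Real.log_mul (by norm_num) (by positivity), Real.log_pow] at this
    rw [max_eq_left hlogσ]
    simpa using this
  · have : Real.log (1 + σ ^ 2) ≤ Real.log 2 :=
      Real.log_le_log (by positivity) (by nlinarith)
    have h2 : 0 ≤ max (Real.log σ) 0 := le_max_right _ _
    linarith

lemma log_growth_bound (μ : ℝ) {σ : ℝ} (hσ : 0 < σ) (z : ℝ) :
    Real.log (1 + z ^ 2) ≤
      (2 * Real.log 2 + Real.log (1 + μ ^ 2) + 2 * max (Real.log σ) 0) + ((z - μ) / σ) ^ 2 := by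
  set t := (z - μ) / σ with ht
  have hz : z = μ + σ * t := by rw [ht, mul_div_assoc', mul_div_cancel_left₀ _ hσ.ne']; ring
  have step1 : 1 + z ^ 2 ≤ 2 * (1 + μ ^ 2) * ((1 + σ ^ 2) * (1 + t ^ 2)) := by
    rw [hz]
    nlinarith [sq_nonneg (μ - σ * t), sq_nonneg (μ * t), sq_nonneg (σ * t), sq_nonneg μ,
      sq_nonneg σ, sq_nonneg t, sq_nonneg (μ * σ * t)]
  have hpos1 : (0:ℝ) < 2 * (1 + μ ^ 2) := by positivity
  have hpos2 : (0:ℝ) < 1 + σ ^ 2 := by positivity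
  have hpos3 : (0:ℝ) < 1 + t ^ 2 := by positivity
  have step2 : Real.log (1 + z ^ 2) ≤
      Real.log 2 + Real.log (1 + μ ^ 2) + Real.log (1 + σ ^ 2) + Real.log (1 + t ^ 2) := by
    have := Real.log_le_log (by positivity) step1
    rw [Real.log_mul (by positivity) (by positivity), Real.log_mul (by norm_num) (by positivity),
      Real.log_mul hpos2.ne' hpos3.ne'] at this
    linarith
  have step3 := log_one_add_sq_le hσ
  have step4 : Real.log (1 + t ^ 2) ≤ t ^ 2 := by
    have := Real.log_le_sub_one_of_pos hpos3
    linarith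
  linarith

lemma inner_bound (μ lam : ℝ) {σ : ℝ} (hσ : 0 < σ) :
    ∫⁻ z, ENNReal.ofReal (snPDF μ lam σ z) * ENNReal.ofReal (Real.log (1 + z ^ 2)) ≤
      ENNReal.ofReal (2 * Iphi *
        ((2 * Real.log 2 + Real.log (1 + μ ^ 2) + 2 * max (Real.log σ) 0) * Iphi + Jphi)) := by
  set M : ℝ := 2 * Real.log 2 + Real.log (1 + μ ^ 2) + 2 * max (Real.log σ) 0 with hM
  have hM0 : 0 ≤ M := by
    have h1 : 0 ≤ Real.log 2 := Real.log_nonneg (by norm_num)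
    have h2 : 0 ≤ Real.log (1 + μ ^ 2) := Real.log_nonneg (by nlinarith [sq_nonneg μ])
    have h3 : 0 ≤ max (Real.log σ) 0 := le_max_right _ _
    rw [hM]; linarith
  have h_int : Integrable (fun t : ℝ => stdPhi t * (M + t ^ 2)) := by
    have he : (fun t : ℝ => stdPhi t * (M + t ^ 2)) =
        fun t => M * stdPhi t + stdPhi t * t ^ 2 := funext fun t => by ring
    rw [he]
    exact (integrable_stdPhi.const_mul M).add integrable_stdPhi_sq
  set g : ℝ → ℝ := fun z => (2 * Iphi / σ) * (stdPhi ((z - μ) / σ) * (M + ((z - μ) / σ) ^ 2))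
    with hg
  have hg_int : Integrable g := by
    have h1 : Integrable (fun y : ℝ => stdPhi (y / σ) * (M + (y / σ) ^ 2)) :=
      h_int.comp_div hσ.ne'
    have h2 : Integrable (fun z : ℝ => stdPhi ((z - μ) / σ) * (M + ((z - μ) / σ) ^ 2)) :=
      h1.comp_sub_right μ
    exact h2.const_mul _
  have hg_nonneg : ∀ z, 0 ≤ g z := by
    intro z
    have := stdPhi_nonneg ((z - μ) / σ)
    have h2 : 0 ≤ M + ((z - μ) / σ) ^ 2 := by positivity
    have h3 : 0 ≤ 2 * Iphi / σ := by
      have := Iphi_nonneg; positivity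
    rw [hg]; positivity
  have pointwise : ∀ z, ENNReal.ofReal (snPDF μ lam σ z) *
      ENNReal.ofReal (Real.log (1 + z ^ 2)) ≤ ENNReal.ofReal (g z) := by
    intro z
    rw [← ENNReal.ofReal_mul (snPDF_nonneg μ lam hσ.le z)]
    apply ENNReal.ofReal_le_ofReal
    have hlogz : 0 ≤ Real.log (1 + z ^ 2) := Real.log_nonneg (by nlinarith [sq_nonneg z])
    have hb : 0 ≤ 2 / σ * stdPhi ((z - μ) / σ) * Iphi := by
      have := stdPhi_nonneg ((z - μ) / σ); have := Iphi_nonneg; positivity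
    calc snPDF μ lam σ z * Real.log (1 + z ^ 2)
        ≤ (2 / σ * stdPhi ((z - μ) / σ) * Iphi) * Real.log (1 + z ^ 2) :=
          mul_le_mul_of_nonneg_right (snPDF_le μ lam hσ z) hlogz
      _ ≤ (2 / σ * stdPhi ((z - μ) / σ) * Iphi) * (M + ((z - μ) / σ) ^ 2) :=
          mul_le_mul_of_nonneg_left (log_growth_bound μ hσ z) hb
      _ = g z := by rw [hg]; ring
  calc ∫⁻ z, ENNReal.ofReal (snPDF μ lam σ z) * ENNReal.ofReal (Real.log (1 + z ^ 2))
      ≤ ∫⁻ z, ENNReal.ofReal (g z) := lintegral_mono pointwise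
    _ = ENNReal.ofReal (∫ z, g z) :=
        (ofReal_integral_eq_lintegral_ofReal hg_int
          (Filter.Eventually.of_forall hg_nonneg)).symm
    _ = ENNReal.ofReal (2 * Iphi * (M * Iphi + Jphi)) := by
        congr 1
        have e0 : ∫ z, g z = (2 * Iphi / σ) *
            ∫ z, stdPhi ((z - μ) / σ) * (M + ((z - μ) / σ) ^ 2) := by
          rw [hg]; exact integral_const_mul _ _
        have e1 : (∫ z, stdPhi ((z - μ) / σ) * (M + ((z - μ) / σ) ^ 2)) =
            ∫ y, stdPhi (y / σ) * (M + (y / σ) ^ 2) :=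
          integral_sub_right_eq_self (fun y => stdPhi (y / σ) * (M + (y / σ) ^ 2)) μ
        have e2 : (∫ y, stdPhi (y / σ) * (M + (y / σ) ^ 2)) =
            |σ| • ∫ t, stdPhi t * (M + t ^ 2) :=
          Measure.integral_comp_div (fun t => stdPhi t * (M + t ^ 2)) σ
        have e3 : (∫ t, stdPhi t * (M + t ^ 2)) = M * Iphi + Jphi := by
          have he : (fun t : ℝ => stdPhi t * (M + t ^ 2)) =
              fun t => M * stdPhi t + stdPhi t * t ^ 2 := funext fun t => by ring
          rw [he, integral_add (integrable_stdPhi.const_mul M) integrable_stdPhi_sq,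
            integral_const_mul]
          rfl
        rw [e0, e1, e2, e3, abs_of_pos hσ, smul_eq_mul]
        field_simp

lemma ofReal_max_zero (x : ℝ) : ENNReal.ofReal (max x 0) = ENNReal.ofReal x := by
  rcases le_total x 0 with h | h
  · rw [max_eq_right h, ENNReal.ofReal_zero, eq_comm, ENNReal.ofReal_eq_zero]; exact h
  · rw [max_eq_left h]

theorem stmt11 (p μ lam ℓ : ℝ) (hp : p ∈ Set.Ioo (0 : ℝ) 1) (hℓ : 0 < ℓ)
    (G : Measure ℝ) (hG : IsProbabilityMeasure G) (hsupp : G (Set.Iio ℓ) = 0)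
    (hlog : ∫⁻ σ, ENNReal.ofReal (Real.log σ) ∂G < ⊤)
    (f : ℝ → ℝ) (hf : f = fun z => p * stdPhi z + (1 - p) * snsmPDF μ lam G z) :
    ∫⁻ z, ENNReal.ofReal (-(f z * Real.log (f z))) ∂(volume : Measure ℝ) < ⊤ := by
  obtain ⟨hp0, hp1⟩ := hp
  subst hf
  -- a.e. σ with respect to G satisfies ℓ ≤ σ
  have haeσ : ∀ᵐ σ ∂G, ℓ ≤ σ := by
    rw [ae_iff]
    have : {σ : ℝ | ¬ ℓ ≤ σ} = Set.Iio ℓ := by ext σ; simp [not_le]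
    rw [this]; exact hsupp
  have hsnsm_nonneg : ∀ z, 0 ≤ snsmPDF μ lam G z := fun z =>
    integral_nonneg_of_ae (haeσ.mono fun σ hσ => snPDF_nonneg μ lam (hℓ.le.trans hσ) z)
  have hf_nonneg : ∀ z, 0 ≤ p * stdPhi z + (1 - p) * snsmPDF μ lam G z := fun z => by
    have := stdPhi_nonneg z; have := hsnsm_nonneg z; nlinarith
  have hL_nonneg : ∀ z : ℝ, 0 ≤ Real.log (1 + z ^ 2) := fun z =>
    Real.log_nonneg (by nlinarith [sq_nonneg z])
  have hL_le : ∀ z : ℝ, Real.log (1 + z ^ 2) ≤ z ^ 2 := fun z => by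
    have := Real.log_le_sub_one_of_pos (show (0:ℝ) < 1 + z ^ 2 by positivity)
    linarith
  -- finiteness of the Gaussian part with quadratic weight
  have Afin : ∫⁻ z, ENNReal.ofReal (stdPhi z * z ^ 2) ∂(volume : Measure ℝ) < ⊤ :=
    integrable_stdPhi_sq.lintegral_lt_top
  -- finiteness of the mixture part with log weight
  have Bfin : ∫⁻ z, ENNReal.ofReal (snsmPDF μ lam G z * Real.log (1 + z ^ 2))
      ∂(volume : Measure ℝ) < ⊤ := by
    have hmσz : Measurable fun q : ℝ × ℝ =>
        ENNReal.ofReal (snPDF μ lam q.2 q.1) * ENNReal.ofReal (Real.log (1 + q.1 ^ 2)) := by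
      apply Measurable.fun_mul
      · exact (((snPDF_jointly_measurable μ lam).comp
          (measurable_snd.prodMk measurable_fst))).ennreal_ofReal
      · exact ((measurable_const.add ((measurable_fst.pow_const 2))).comp
          measurable_id).log.ennreal_ofReal
    have hstep1 : ∀ z, ENNReal.ofReal (snsmPDF μ lam G z * Real.log (1 + z ^ 2)) ≤
        ∫⁻ σ, ENNReal.ofReal (snPDF μ lam σ z) * ENNReal.ofReal (Real.log (1 + z ^ 2)) ∂G := by
      intro z
      have hmσ : Measurable fun σ => ENNReal.ofReal (snPDF μ lam σ z) :=
        ((snPDF_jointly_measurable μ lam).comp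
          (measurable_id.prodMk measurable_const)).ennreal_ofReal
      rw [ENNReal.ofReal_mul (hsnsm_nonneg z), lintegral_mul_const _ hmσ]
      apply mul_le_mul_left
      by_cases hi : Integrable (fun σ => snPDF μ lam σ z) G
      · exact le_of_eq (ofReal_integral_eq_lintegral_ofReal hi
          (haeσ.mono fun σ hσ => snPDF_nonneg μ lam (hℓ.le.trans hσ) z))
      · rw [snsmPDF, integral_undef hi]; simp
    have hswap : ∫⁻ z, ∫⁻ σ, ENNReal.ofReal (snPDF μ lam σ z) *
          ENNReal.ofReal (Real.log (1 + z ^ 2)) ∂G ∂(volume : Measure ℝ) =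
        ∫⁻ σ, ∫⁻ z, ENNReal.ofReal (snPDF μ lam σ z) *
          ENNReal.ofReal (Real.log (1 + z ^ 2)) ∂(volume : Measure ℝ) ∂G :=
      lintegral_lintegral_swap hmσz.aemeasurable
    have houter : ∫⁻ σ, ∫⁻ z, ENNReal.ofReal (snPDF μ lam σ z) *
          ENNReal.ofReal (Real.log (1 + z ^ 2)) ∂(volume : Measure ℝ) ∂G < ⊤ := by
      set c1 : ℝ := 2 * Iphi * ((2 * Real.log 2 + Real.log (1 + μ ^ 2)) * Iphi + Jphi) with hc1
      set c2 : ℝ := 4 * Iphi ^ 2 with hc2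
      have hbound : ∫⁻ σ, ∫⁻ z, ENNReal.ofReal (snPDF μ lam σ z) *
            ENNReal.ofReal (Real.log (1 + z ^ 2)) ∂(volume : Measure ℝ) ∂G ≤
          ∫⁻ σ, (ENNReal.ofReal c1 + ENNReal.ofReal c2 * ENNReal.ofReal (Real.log σ)) ∂G := by
        apply lintegral_mono_ae
        filter_upwards [haeσ] with σ hσ
        have hσ0 : 0 < σ := hℓ.trans_le hσ
        refine le_trans (inner_bound μ lam hσ0) ?_
        have hrw : 2 * Iphi *
            ((2 * Real.log 2 + Real.log (1 + μ ^ 2) + 2 * max (Real.log σ) 0) * Iphi + Jphi)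
            = c1 + c2 * max (Real.log σ) 0 := by rw [hc1, hc2]; ring
        rw [hrw]
        refine le_trans ENNReal.ofReal_add_le ?_
        have : ENNReal.ofReal (c2 * max (Real.log σ) 0) =
            ENNReal.ofReal c2 * ENNReal.ofReal (Real.log σ) := by
          rw [ENNReal.ofReal_mul (by rw [hc2]; positivity), ofReal_max_zero]
        rw [this]
      refine lt_of_le_of_lt hbound ?_
      rw [lintegral_add_left measurable_const, lintegral_const,
        lintegral_const_mul _ Real.measurable_log.ennreal_ofReal]
      have h1 : ENNReal.ofReal c1 * G Set.univ < ⊤ := by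
        rw [hG.measure_univ, mul_one]; exact ENNReal.ofReal_lt_top
      have h2 : ENNReal.ofReal c2 * ∫⁻ σ, ENNReal.ofReal (Real.log σ) ∂G < ⊤ :=
        ENNReal.mul_lt_top ENNReal.ofReal_lt_top hlog
      exact ENNReal.add_lt_top.mpr ⟨h1, h2⟩
    calc ∫⁻ z, ENNReal.ofReal (snsmPDF μ lam G z * Real.log (1 + z ^ 2))
        ≤ ∫⁻ z, ∫⁻ σ, ENNReal.ofReal (snPDF μ lam σ z) *
            ENNReal.ofReal (Real.log (1 + z ^ 2)) ∂G ∂(volume : Measure ℝ) :=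
          lintegral_mono hstep1
      _ < ⊤ := by rw [hswap]; exact houter
  -- combine
  have key : ∀ z : ℝ, ENNReal.ofReal
      (-((p * stdPhi z + (1 - p) * snsmPDF μ lam G z) *
        Real.log (p * stdPhi z + (1 - p) * snsmPDF μ lam G z))) ≤
      (ENNReal.ofReal (stdPhi z * z ^ 2) +
        ENNReal.ofReal (snsmPDF μ lam G z * Real.log (1 + z ^ 2))) +
      ENNReal.ofReal ((1 + z ^ 2)⁻¹) := by
    intro z
    have hFnn := hf_nonneg z
    set F := p * stdPhi z + (1 - p) * snsmPDF μ lam G z with hF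
    clear_value F
    have h1 : -(F * Real.log F) ≤ F * Real.log (1 + z ^ 2) + (1 + z ^ 2)⁻¹ :=
      key_ineq F z hFnn
    have h2 : F * Real.log (1 + z ^ 2) ≤
        stdPhi z * z ^ 2 + snsmPDF μ lam G z * Real.log (1 + z ^ 2) := by
      have b1 : p * stdPhi z * Real.log (1 + z ^ 2) ≤ stdPhi z * z ^ 2 := by
        have k1 : p * (stdPhi z * Real.log (1 + z ^ 2)) ≤ 1 * (stdPhi z * Real.log (1 + z ^ 2)) :=
          mul_le_mul_of_nonneg_right hp1.le (mul_nonneg (stdPhi_nonneg z) (hL_nonneg z))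
        have k2 : stdPhi z * Real.log (1 + z ^ 2) ≤ stdPhi z * z ^ 2 :=
          mul_le_mul_of_nonneg_left (hL_le z) (stdPhi_nonneg z)
        nlinarith [k1, k2]
      have b2 : (1 - p) * snsmPDF μ lam G z * Real.log (1 + z ^ 2) ≤
          snsmPDF μ lam G z * Real.log (1 + z ^ 2) := by
        have k1 : (1 - p) * (snsmPDF μ lam G z * Real.log (1 + z ^ 2)) ≤
            1 * (snsmPDF μ lam G z * Real.log (1 + z ^ 2)) :=
          mul_le_mul_of_nonneg_right (by linarith) (mul_nonneg (hsnsm_nonneg z) (hL_nonneg z))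
        nlinarith [k1]
      have : F * Real.log (1 + z ^ 2) = p * stdPhi z * Real.log (1 + z ^ 2) +
          (1 - p) * snsmPDF μ lam G z * Real.log (1 + z ^ 2) := by rw [hF]; ring
      linarith
    calc ENNReal.ofReal (-(F * Real.log F))
        ≤ ENNReal.ofReal ((stdPhi z * z ^ 2 + snsmPDF μ lam G z * Real.log (1 + z ^ 2)) +
            (1 + z ^ 2)⁻¹) := ENNReal.ofReal_le_ofReal (by linarith)
      _ ≤ ENNReal.ofReal (stdPhi z * z ^ 2 + snsmPDF μ lam G z * Real.log (1 + z ^ 2)) +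
            ENNReal.ofReal ((1 + z ^ 2)⁻¹) := ENNReal.ofReal_add_le
      _ ≤ (ENNReal.ofReal (stdPhi z * z ^ 2) +
            ENNReal.ofReal (snsmPDF μ lam G z * Real.log (1 + z ^ 2))) +
            ENNReal.ofReal ((1 + z ^ 2)⁻¹) :=
          add_le_add_left ENNReal.ofReal_add_le _
  calc ∫⁻ z, ENNReal.ofReal
        (-((p * stdPhi z + (1 - p) * snsmPDF μ lam G z) *
          Real.log (p * stdPhi z + (1 - p) * snsmPDF μ lam G z))) ∂(volume : Measure ℝ)
      ≤ ∫⁻ z, ((ENNReal.ofReal (stdPhi z * z ^ 2) +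
          ENNReal.ofReal (snsmPDF μ lam G z * Real.log (1 + z ^ 2))) +
          ENNReal.ofReal ((1 + z ^ 2)⁻¹)) ∂(volume : Measure ℝ) := lintegral_mono key
    _ ≤ (∫⁻ z, (ENNReal.ofReal (stdPhi z * z ^ 2) +
          ENNReal.ofReal (snsmPDF μ lam G z * Real.log (1 + z ^ 2))) ∂(volume : Measure ℝ)) +
        ∫⁻ z, ENNReal.ofReal ((1 + z ^ 2)⁻¹) ∂(volume : Measure ℝ) :=
        le_of_eq (lintegral_add_right _
          (((measurable_const.add ((measurable_id.pow_const 2))).inv).ennreal_ofReal))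
    _ ≤ ((∫⁻ z, ENNReal.ofReal (stdPhi z * z ^ 2) ∂(volume : Measure ℝ)) +
          ∫⁻ z, ENNReal.ofReal (snsmPDF μ lam G z * Real.log (1 + z ^ 2)) ∂(volume : Measure ℝ)) +
        ∫⁻ z, ENNReal.ofReal ((1 + z ^ 2)⁻¹) ∂(volume : Measure ℝ) :=
        add_le_add_left (le_of_eq (lintegral_add_left
          ((stdPhi_measurable.mul (measurable_id.pow_const 2)).ennreal_ofReal) _)) _
    _ < ⊤ := by
        have Cfin : ∫⁻ z, ENNReal.ofReal ((1 + z ^ 2)⁻¹) ∂(volume : Measure ℝ) < ⊤ :=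
          integrable_inv_one_add_sq.lintegral_lt_top
        exact ENNReal.add_lt_top.mpr ⟨ENNReal.add_lt_top.mpr ⟨Afin, Bfin⟩, Cfin⟩
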